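/- (Theorem 2) Let m, n, r be natural numbers and let \(\alpha\) be a rational number with \(\alpha\neq 0\), \(\alpha\neq -1\), and \(\alpha m+n\neq 0\). Then \(\sum_{a=0}^{m-r-2}\sum_{b=0}^{n-r-2}\binom{(1+\alpha)m-a+b-1}{m-r-2-a}\binom{(1+\alpha^{-1})n+a-b-1}{n-r-2-b}+\sum_{a=0}^{m+r}\sum_{b=0}^{n+r}\binom{(1+\alpha)m-a+b-1}{m+r-a}\binom{(1+\alpha^{-1})n+a-b-1}{n+r-b}=\frac{2mn}{(1+\alpha)(m+\alpha^{-1}n)}\binom{(1+\alpha)m}{m}\binom{(1+\alpha^{-1})n}{n}+\sum_{k=-r}^{r}(r-|k|+1)\binom{(1+\alpha)m}{m-k}\binom{(1+\alpha^{-1})n}{n-k}\), where sums over empty ranges are 0 and k ranges over integers. -/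

import Mathlib

/-- The generalized binomial coefficient `x(x-1)⋯(x-k+1)/k!` for a rational `x`
and a natural number `k`. -/
noncomputable def qbinom (x : ℚ) (k : ℕ) : ℚ :=
  (∏ i ∈ Finset.range k, (x - (i : ℚ))) / (Nat.factorial k : ℚ)

/-- The generalized binomial coefficient for a rational `x` and an integer `k`,
which is `0` when `k < 0`. -/
noncomputable def qbinomZ (x : ℚ) (k : ℤ) : ℚ :=
  if k < 0 then 0 else qbinom x k.toNat

lemma qbinomZ_neg (x : ℚ) {k : ℤ} (hk : k < 0) : qbinomZ x k = 0 := by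
  simp [qbinomZ, hk]

lemma qbinomZ_coe (x : ℚ) (k : ℕ) : qbinomZ x (k : ℤ) = qbinom x k := by
  simp [qbinomZ]

lemma qbinom_zero (x : ℚ) : qbinom x 0 = 1 := by simp [qbinom]

lemma factorial_ne (k : ℕ) : ((Nat.factorial k : ℚ)) ≠ 0 := by
  exact_mod_cast Nat.factorial_ne_zero k

lemma pascal_nat (x : ℚ) (k : ℕ) :
    qbinom x (k+1) = qbinom (x-1) (k+1) + qbinom (x-1) k := by
  have h1 : ∏ i ∈ Finset.range (k+1), (x - (i:ℚ)) = x * ∏ i ∈ Finset.range k, (x - 1 - (i:ℚ)) := by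
    rw [Finset.prod_range_succ']
    simp only [Nat.cast_zero, sub_zero, Nat.cast_add, Nat.cast_one]
    rw [mul_comm]
    congr 1
    apply Finset.prod_congr rfl
    intro i _
    ring
  have h2 : ∏ i ∈ Finset.range (k+1), (x - 1 - (i:ℚ)) =
      (∏ i ∈ Finset.range k, (x - 1 - (i:ℚ))) * (x - 1 - k) := Finset.prod_range_succ _ _
  have hfact : (Nat.factorial (k+1) : ℚ) = (k+1) * Nat.factorial k := by
    rw [Nat.factorial_succ]; push_cast; ring
  unfold qbinom
  rw [h1, h2, hfact]
  have h3 := factorial_ne k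
  field_simp
  ring

lemma mult_nat (x : ℚ) (k : ℕ) :
    ((k:ℚ)+1) * qbinom x (k+1) = (x - k) * qbinom x k := by
  have h2 : ∏ i ∈ Finset.range (k+1), (x - (i:ℚ)) =
      (∏ i ∈ Finset.range k, (x - (i:ℚ))) * (x - k) := Finset.prod_range_succ _ _
  have hfact : (Nat.factorial (k+1) : ℚ) = (k+1) * Nat.factorial k := by
    rw [Nat.factorial_succ]; push_cast; ring
  unfold qbinom
  rw [h2, hfact]
  have h3 := factorial_ne k
  have h4 : ((k:ℚ)+1) ≠ 0 := by positivity
  field_simp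

lemma pascalZ (x : ℚ) (k : ℤ) :
    qbinomZ x k = qbinomZ (x-1) k + qbinomZ (x-1) (k-1) := by
  rcases lt_trichotomy k 0 with hk | hk | hk
  · rw [qbinomZ_neg _ hk, qbinomZ_neg _ hk, qbinomZ_neg _ (by omega)]; ring
  · subst hk
    rw [qbinomZ_neg _ (by norm_num : (0:ℤ)-1 < 0)]
    show qbinomZ x ((0:ℕ):ℤ) = qbinomZ (x-1) ((0:ℕ):ℤ) + 0
    rw [qbinomZ_coe, qbinomZ_coe, qbinom_zero, qbinom_zero]; ring
  · obtain ⟨j, rfl⟩ : ∃ j : ℕ, k = (j:ℤ)+1 := ⟨(k-1).toNat, by omega⟩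
    have e1 : ((j:ℤ)+1) = ((j+1:ℕ):ℤ) := by push_cast; ring
    have e2 : ((j:ℤ)+1) - 1 = ((j:ℕ):ℤ) := by push_cast; ring
    rw [e1, qbinomZ_coe, qbinomZ_coe, e1.symm, e2, qbinomZ_coe]
    exact pascal_nat _ _

lemma multZ (x : ℚ) (k : ℤ) :
    (k:ℚ) * qbinomZ x k = (x - k + 1) * qbinomZ x (k-1) := by
  rcases lt_trichotomy k 0 with hk | hk | hk
  · rw [qbinomZ_neg _ hk, qbinomZ_neg _ (by omega)]; ring
  · subst hk
    rw [qbinomZ_neg _ (by norm_num : (0:ℤ)-1 < 0)]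
    push_cast; ring
  · obtain ⟨j, rfl⟩ : ∃ j : ℕ, k = (j:ℤ)+1 := ⟨(k-1).toNat, by omega⟩
    have e1 : ((j:ℤ)+1) = ((j+1:ℕ):ℤ) := by push_cast; ring
    have e2 : ((j:ℤ)+1) - 1 = ((j:ℕ):ℤ) := by push_cast; ring
    rw [e1, qbinomZ_coe, e1.symm, e2, qbinomZ_coe]
    push_cast
    have := mult_nat x j
    rw [this]; ring

lemma Icc_top (a b : ℤ) (h : a ≤ b + 1) :
    Finset.Icc a (b+1) = insert (b+1) (Finset.Icc a b) := by
  ext k; simp only [Finset.mem_Icc, Finset.mem_insert]; omega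

lemma sum_Icc_top (f : ℤ → ℚ) {a b : ℤ} (h : a ≤ b+1) :
    ∑ k ∈ Finset.Icc a (b+1), f k = (∑ k ∈ Finset.Icc a b, f k) + f (b+1) := by
  rw [Icc_top a b h, Finset.sum_insert (by simp [Finset.mem_Icc])]
  ring

lemma sum_Icc_bot (f : ℤ → ℚ) {a b : ℤ} (h : a - 1 ≤ b) :
    ∑ k ∈ Finset.Icc (a-1) b, f k = f (a-1) + ∑ k ∈ Finset.Icc a b, f k := by
  have : Finset.Icc (a-1) b = insert (a-1) (Finset.Icc a b) := by
    ext k; simp only [Finset.mem_Icc, Finset.mem_insert]; omega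
  rw [this, Finset.sum_insert (by simp [Finset.mem_Icc])]

lemma sum_Icc_empty (f : ℤ → ℚ) {a b : ℤ} (h : b < a) :
    ∑ k ∈ Finset.Icc a b, f k = 0 := by
  rw [Finset.Icc_eq_empty (by omega), Finset.sum_empty]

lemma tele (f : ℤ → ℚ) (a : ℤ) : ∀ b : ℤ, a - 1 ≤ b →
    ∑ k ∈ Finset.Icc a b, (f k - f (k-1)) = f b - f (a-1) := by
  refine Int.le_induction ?_ ?_
  · rw [sum_Icc_empty _ (by omega)]; ring
  · intro b hb ih
    rw [sum_Icc_top _ (by omega), ih]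
    have : b + 1 - 1 = b := by ring
    rw [this]; ring

lemma sum_Icc_map (f : ℤ → ℚ) (a b c : ℤ) :
    ∑ k ∈ Finset.Icc a b, f (k+c) = ∑ k ∈ Finset.Icc (a+c) (b+c), f k := by
  rw [← Finset.map_add_right_Icc, Finset.sum_map]
  rfl

lemma sum_Icc_reflect (f : ℤ → ℚ) (a b t : ℤ) :
    ∑ k ∈ Finset.Icc a b, f (t - k) = ∑ k ∈ Finset.Icc (t-b) (t-a), f k := by
  rcases le_or_gt a b with hab | hab
  · apply Finset.sum_nbij' (i := fun k => t - k) (j := fun k => t - k) <;>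
      simp only [Finset.mem_Icc] <;> intros <;> first | omega | rfl | trivial
  · rw [sum_Icc_empty _ hab, sum_Icc_empty _ (by omega)]

lemma sum_shift (f : ℤ → ℚ) (h0 : f (-1) = 0) (Q : ℤ) :
    ∑ j ∈ Finset.Icc 0 (Q+1), f (j-1) = ∑ j ∈ Finset.Icc 0 Q, f j := by
  rcases lt_or_ge (Q+1) 0 with hq | hq
  · rw [sum_Icc_empty _ (by omega), sum_Icc_empty _ (by omega)]
  · calc ∑ j ∈ Finset.Icc 0 (Q+1), f (j-1)
        = ∑ j ∈ Finset.Icc 0 (Q+1), f (j + (-1)) := by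
          simp only [sub_eq_add_neg]
      _ = ∑ j ∈ Finset.Icc (0 + (-1)) (Q+1+(-1)), f j := sum_Icc_map f 0 (Q+1) (-1)
      _ = ∑ j ∈ Finset.Icc (0-1) Q, f j := by norm_num
      _ = ∑ j ∈ Finset.Icc 0 Q, f j := by
          rw [sum_Icc_bot _ (by omega)]
          have e : (0:ℤ) - 1 = -1 := by ring
          rw [e, h0]; ring
noncomputable def cc (u v : ℚ) (i j : ℤ) : ℚ :=
  qbinomZ (u + i - j - 1) i * qbinomZ (v - i + j - 1) j

noncomputable def Phi (u v : ℚ) (P Q : ℤ) : ℚ :=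
  ∑ i ∈ Finset.Icc 0 P, ∑ j ∈ Finset.Icc 0 Q, cc u v i j

lemma cc_left (u v : ℚ) {i : ℤ} (h : i < 0) (j : ℤ) : cc u v i j = 0 := by
  rw [cc, qbinomZ_neg _ h, zero_mul]

lemma cc_right (u v : ℚ) (i : ℤ) {j : ℤ} (h : j < 0) : cc u v i j = 0 := by
  rw [cc, qbinomZ_neg _ h, mul_zero]

lemma Phi_left (u v : ℚ) {P : ℤ} (h : P < 0) (Q : ℤ) : Phi u v P Q = 0 := by
  rw [Phi, sum_Icc_empty _ (by omega)]

lemma Phi_right (u v : ℚ) (P : ℤ) {Q : ℤ} (h : Q < 0) : Phi u v P Q = 0 := by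
  rw [Phi]
  apply Finset.sum_eq_zero
  intro i _
  exact sum_Icc_empty _ (by omega)

lemma Phi_delta (u v : ℚ) (P Q : ℤ) :
    Phi u v (P+1) (Q+1) = Phi u v P Q + (∑ j ∈ Finset.Icc 0 (Q+1), cc u v (P+1) j)
      + (∑ i ∈ Finset.Icc 0 P, cc u v i (Q+1)) := by
  rcases lt_or_ge (P+1) 0 with hP | hP
  · rw [Phi_left _ _ (by omega), Phi_left _ _ (by omega),
      Finset.sum_eq_zero (fun j _ => cc_left u v (by omega) j),
      sum_Icc_empty _ (by omega)]
    ring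
  · rcases lt_or_ge (Q+1) 0 with hQ | hQ
    · rw [Phi_right u v (P+1) (show Q+1 < 0 by omega), Phi_right u v P (show Q < 0 by omega),
        sum_Icc_empty _ (by omega),
        Finset.sum_eq_zero (fun i _ => cc_right u v i (show Q+1 < 0 by omega))]
      ring
    · rw [Phi, sum_Icc_top _ (by omega)]
      have inner : ∀ i : ℤ, ∑ j ∈ Finset.Icc 0 (Q+1), cc u v i j
          = (∑ j ∈ Finset.Icc 0 Q, cc u v i j) + cc u v i (Q+1) :=
        fun i => sum_Icc_top _ (by omega)
      rw [Finset.sum_congr rfl (fun i _ => inner i), Finset.sum_add_distrib]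
      rw [Phi]
      ring

lemma key1 (u v : ℚ) (P j : ℤ) :
    cc u v (P+1) j - cc u v P (j-1)
      = (qbinomZ (u+P-j) (P+1) * qbinomZ (v-P+j-1) j)
        - (qbinomZ (u+P-j+1) (P+1) * qbinomZ (v-P+j-2) (j-1)) := by
  have h1 : qbinomZ (v-P+j-1) j
      = qbinomZ (v-P+j-2) j + qbinomZ (v-P+j-2) (j-1) := by
    have := pascalZ (v-P+j-1) j
    have e : v-P+j-1-1 = v-P+j-2 := by ring
    rwa [e] at this
  have h2 : qbinomZ (u+P-j+1) (P+1)
      = qbinomZ (u+P-j) (P+1) + qbinomZ (u+P-j) ((P+1)-1) := by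
    have := pascalZ (u+P-j+1) (P+1)
    have e : u+P-j+1-1 = u+P-j := by ring
    rwa [e] at this
  have eP : (P:ℤ)+1-1 = P := by ring
  rw [eP] at h2
  have ecc1 : cc u v (P+1) j = qbinomZ (u+P-j) (P+1) * qbinomZ (v-P+j-2) j := by
    rw [cc]
    congr 2 <;> push_cast <;> ring
  have ecc2 : cc u v P (j-1) = qbinomZ (u+P-j) P * qbinomZ (v-P+j-2) (j-1) := by
    rw [cc]
    congr 2 <;> push_cast <;> ring
  rw [ecc1, ecc2, h1, h2]
  ring

lemma rowdiff (u v : ℚ) (P Q : ℤ) :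
    (∑ j ∈ Finset.Icc 0 (Q+1), cc u v (P+1) j) - (∑ j ∈ Finset.Icc 0 Q, cc u v P j)
      = qbinomZ (u+P-Q-1) (P+1) * qbinomZ (v-P+Q) (Q+1) := by
  rcases lt_or_ge (Q+1) 0 with hQ | hQ
  · rw [sum_Icc_empty _ (by omega), sum_Icc_empty _ (by omega),
      qbinomZ_neg _ (by omega : Q+1 < 0), mul_zero]
    ring
  · set φ : ℤ → ℚ := fun j => qbinomZ (u+P-j) (P+1) * qbinomZ (v-P+j-1) j with hφ
    have hshift : ∑ j ∈ Finset.Icc 0 (Q+1), cc u v P (j-1) = ∑ j ∈ Finset.Icc 0 Q, cc u v P j :=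
      sum_shift _ (cc_right u v P (by norm_num)) Q
    rw [← hshift, ← Finset.sum_sub_distrib]
    have hpt : ∀ j ∈ Finset.Icc (0:ℤ) (Q+1), cc u v (P+1) j - cc u v P (j-1) = φ j - φ (j-1) := by
      intro j _
      rw [key1]
      simp only [hφ]
      push_cast
      ring_nf
    rw [Finset.sum_congr rfl hpt, tele φ 0 (Q+1) (by omega)]
    have hφm : φ (0-1) = 0 := by
      simp only [hφ]
      rw [qbinomZ_neg _ (by norm_num : (0:ℤ)-1 < 0), mul_zero]
    rw [hφm, sub_zero]
    simp only [hφ]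
    congr 2 <;> push_cast <;> ring

lemma key2 (u v : ℚ) (Q i : ℤ) :
    cc u v i (Q+1) - cc u v (i-1) Q
      = (qbinomZ (u+i-Q-1) i * qbinomZ (v-i+Q) (Q+1))
        - (qbinomZ (u+i-Q-2) (i-1) * qbinomZ (v-i+Q+1) (Q+1)) := by
  have h1 : qbinomZ (u+i-Q-1) i
      = qbinomZ (u+i-Q-2) i + qbinomZ (u+i-Q-2) (i-1) := by
    have := pascalZ (u+i-Q-1) i
    have e : u+i-Q-1-1 = u+i-Q-2 := by ring
    rwa [e] at this
  have h2 : qbinomZ (v-i+Q+1) (Q+1)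
      = qbinomZ (v-i+Q) (Q+1) + qbinomZ (v-i+Q) ((Q+1)-1) := by
    have := pascalZ (v-i+Q+1) (Q+1)
    have e : v-i+Q+1-1 = v-i+Q := by ring
    rwa [e] at this
  have eQ : (Q:ℤ)+1-1 = Q := by ring
  rw [eQ] at h2
  have ecc1 : cc u v i (Q+1) = qbinomZ (u+i-Q-2) i * qbinomZ (v-i+Q) (Q+1) := by
    rw [cc]
    congr 2 <;> push_cast <;> ring
  have ecc2 : cc u v (i-1) Q = qbinomZ (u+i-Q-2) (i-1) * qbinomZ (v-i+Q) Q := by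
    rw [cc]
    congr 2 <;> push_cast <;> ring
  rw [ecc1, ecc2, h1, h2]
  ring

lemma coldiff (u v : ℚ) (P Q : ℤ) :
    (∑ i ∈ Finset.Icc 0 P, cc u v i (Q+1)) - (∑ i ∈ Finset.Icc 0 (P-1), cc u v i Q)
      = qbinomZ (u+P-Q-1) P * qbinomZ (v-P+Q) (Q+1) := by
  rcases lt_or_ge P 0 with hP | hP
  · rw [sum_Icc_empty _ (by omega), sum_Icc_empty _ (by omega),
      qbinomZ_neg _ (by omega : P < 0), zero_mul]
    ring
  · set ψ : ℤ → ℚ := fun i => qbinomZ (u+i-Q-1) i * qbinomZ (v-i+Q) (Q+1) with hψ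
    have hshift : ∑ i ∈ Finset.Icc 0 ((P-1)+1), cc u v (i-1) Q
        = ∑ i ∈ Finset.Icc 0 (P-1), cc u v i Q :=
      sum_shift (fun i => cc u v i Q) (cc_left u v (by norm_num) Q) (P-1)
    have eP : (P:ℤ)-1+1 = P := by ring
    rw [eP] at hshift
    rw [← hshift, ← Finset.sum_sub_distrib]
    have hpt : ∀ i ∈ Finset.Icc (0:ℤ) P, cc u v i (Q+1) - cc u v (i-1) Q = ψ i - ψ (i-1) := by
      intro i _
      rw [key2]
      simp only [hψ]
      push_cast
      ring_nf
    rw [Finset.sum_congr rfl hpt, tele ψ 0 P (by omega)]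
    have hψm : ψ (0-1) = 0 := by
      simp only [hψ]
      rw [qbinomZ_neg _ (by norm_num : (0:ℤ)-1 < 0), zero_mul]
    rw [hψm, sub_zero]

lemma secdiff (u v : ℚ) (P Q : ℤ) :
    Phi u v (P+1) (Q+1) - 2 * Phi u v P Q + Phi u v (P-1) (Q-1)
      = qbinomZ (u+P-Q) (P+1) * qbinomZ (v-P+Q) (Q+1) := by
  have d1 := Phi_delta u v P Q
  have d2 := Phi_delta u v (P-1) (Q-1)
  have eP : (P:ℤ)-1+1 = P := by ring
  have eQ : (Q:ℤ)-1+1 = Q := by ring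
  rw [eP, eQ] at d2
  have r := rowdiff u v P Q
  have c := coldiff u v P Q
  have hp : qbinomZ (u+P-Q) (P+1)
      = qbinomZ (u+P-Q-1) (P+1) + qbinomZ (u+P-Q-1) ((P+1)-1) := by
    have := pascalZ (u+P-Q) (P+1)
    have e : u+P-Q-1 = u+P-Q-1 := rfl
    convert this using 3
  have eP1 : (P:ℤ)+1-1 = P := by ring
  rw [eP1] at hp
  linear_combination d1 - d2 + r + c - hp * qbinomZ (v-(P:ℚ)+Q) (Q+1)
noncomputable def G (x y : ℚ) (m n : ℕ) (d : ℤ) : ℚ :=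
  Phi (x - m + n) (y + m - n) ((m:ℤ)-1+d) ((n:ℤ)-1+d)

noncomputable def PP (x y : ℚ) (m n : ℕ) (k : ℤ) : ℚ :=
  qbinomZ x ((m:ℤ)+k) * qbinomZ y ((n:ℤ)+k)

lemma Gsec (x y : ℚ) (m n : ℕ) (d : ℤ) :
    G x y m n (d+1) - 2 * G x y m n d + G x y m n (d-1) = PP x y m n d := by
  have h := secdiff (x - m + n) (y + m - n) ((m:ℤ)-1+d) ((n:ℤ)-1+d)
  have a1 : (x - ↑m + ↑n) + (((m:ℤ)-1+d : ℤ) : ℚ) - (((n:ℤ)-1+d : ℤ) : ℚ) = x := by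
    push_cast; ring
  have a2 : (y + ↑m - ↑n) - (((m:ℤ)-1+d : ℤ) : ℚ) + (((n:ℤ)-1+d : ℤ) : ℚ) = y := by
    push_cast; ring
  have i1 : ((m:ℤ)-1+d)+1 = (m:ℤ)+d := by ring
  have i2 : ((n:ℤ)-1+d)+1 = (n:ℤ)+d := by ring
  rw [a1, a2, i1, i2] at h
  have e1 : (m:ℤ)-1+(d+1) = ((m:ℤ)-1+d)+1 := by ring
  have e2 : (n:ℤ)-1+(d+1) = ((n:ℤ)-1+d)+1 := by ring
  have e3 : (m:ℤ)-1+(d-1) = ((m:ℤ)-1+d)-1 := by ring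
  have e4 : (n:ℤ)-1+(d-1) = ((n:ℤ)-1+d)-1 := by ring
  unfold G PP
  rw [e1, e2, e3, e4, i1, i2]
  -- h's LHS uses ((m:ℤ)-1+d)+1 rewritten to (m:ℤ)+d already
  rw [← i1, ← i2] at h ⊢
  exact h

lemma Gsec' (x y : ℚ) (m n : ℕ) (d a b : ℤ) (ha : a = d+1) (hb : b = d-1) :
    G x y m n a - 2 * G x y m n d + G x y m n b = PP x y m n d := by
  subst ha; subst hb; exact Gsec x y m n d

lemma Gvanish (x y : ℚ) (m n : ℕ) {d : ℤ} (hd : d ≤ -((min m n : ℕ) : ℤ)) :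
    G x y m n d = 0 := by
  rcases le_total m n with h | h
  · rw [min_eq_left h] at hd
    exact Phi_left _ _ (by omega) _
  · rw [min_eq_right h] at hd
    exact Phi_right _ _ _ (by omega)

lemma Hdelta (x y : ℚ) (m n : ℕ) (j : ℕ) :
    G x y m n ((j:ℤ) + 1 - (min m n : ℕ)) - G x y m n ((j:ℤ) - (min m n : ℕ))
      = ∑ i ∈ Finset.Icc (0:ℤ) (j:ℤ), PP x y m n (i - (min m n : ℕ)) := by
  set s : ℤ := ((min m n : ℕ) : ℤ) with hs
  induction j with
  | zero =>
      have h := Gsec' x y m n (-s) ((0:ℤ)+1-s) ((0:ℤ)-s-1) (by ring) (by ring)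
      have v1 : G x y m n (-s) = 0 := Gvanish x y m n (by omega)
      have v2 : G x y m n ((0:ℤ)-s-1) = 0 := Gvanish x y m n (by omega)
      rw [v1, v2] at h
      have e : ((0:ℕ):ℤ) = 0 := rfl
      rw [e, Finset.Icc_self, Finset.sum_singleton,
        show (0:ℤ)-s = -s by ring, Gvanish x y m n (show -s ≤ -s from le_refl _)]
      rw [show (0:ℤ)+1-s = 1-s by ring] at h
      have hPP : PP x y m n ((0:ℤ)-s) = PP x y m n (-s) := by
        rw [show (0:ℤ)-s = -s by ring]
      rw [show (0:ℤ)+1-s = 1-s by ring]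
      linarith [h, hPP]
  | succ j ih =>
      have h := Gsec' x y m n ((j:ℤ)+1-s) ((j:ℤ)+1+1-s) ((j:ℤ)-s) (by ring) (by ring)
      have hsum : ∑ i ∈ Finset.Icc (0:ℤ) ((j:ℤ)+1), PP x y m n (i - s)
          = (∑ i ∈ Finset.Icc (0:ℤ) (j:ℤ), PP x y m n (i - s)) + PP x y m n ((j:ℤ)+1-s) :=
        sum_Icc_top _ (by omega)
      push_cast
      push_cast at ih
      linarith [h, hsum, ih]

lemma drop_top (f : ℤ → ℚ) (b : ℤ) (hb : 0 ≤ b) (h0 : f b = 0) :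
    ∑ k ∈ Finset.Icc 0 b, f k = ∑ k ∈ Finset.Icc 0 (b-1), f k := by
  have h := sum_Icc_top f (show (0:ℤ) ≤ (b-1)+1 by omega)
  have e : (b-1)+1 = b := by ring
  rw [e] at h
  rw [h, h0, add_zero]

lemma Wform (x y : ℚ) (m n : ℕ) (j : ℕ) :
    G x y m n ((j:ℤ) - (min m n : ℕ))
      = ∑ k ∈ Finset.Icc (0:ℤ) ((j:ℤ)-1), ((j:ℚ) - (k:ℚ)) * PP x y m n (k - (min m n : ℕ)) := by
  set s : ℤ := ((min m n : ℕ) : ℤ) with hs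
  induction j with
  | zero =>
      rw [show ((0:ℕ):ℤ) - s = 0 - s by norm_num]
      rw [Gvanish x y m n (by omega), sum_Icc_empty _ (by omega)]
  | succ j ih =>
      have hd := Hdelta x y m n j
      rw [← hs] at hd
      have step : G x y m n ((j:ℤ)+1-s) = G x y m n ((j:ℤ)-s)
          + ∑ i ∈ Finset.Icc (0:ℤ) (j:ℤ), PP x y m n (i - s) := by linarith [hd]
      have e0 : ((j+1:ℕ):ℤ) - s = (j:ℤ)+1-s := by push_cast; ring
      rw [e0, step, ih]
      have split : ∑ k ∈ Finset.Icc (0:ℤ) ((j:ℤ)+1-1), (((j+1:ℕ):ℚ) - (k:ℚ)) * PP x y m n (k - s)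
          = ∑ k ∈ Finset.Icc (0:ℤ) (j:ℤ), (((j:ℚ) - (k:ℚ)) * PP x y m n (k - s) + PP x y m n (k - s)) := by
        rw [show (j:ℤ)+1-1 = (j:ℤ) by ring]
        apply Finset.sum_congr rfl
        intro k _
        push_cast
        ring
      have e1 : ((j+1:ℕ):ℤ) - 1 = (j:ℤ)+1-1 := by push_cast; ring
      rw [e1, split, Finset.sum_add_distrib]
      congr 1
      have hz : ((j:ℚ) - (((j:ℤ)):ℚ)) * PP x y m n ((j:ℤ) - s) = 0 := by
        have e : ((j:ℚ) - (((j:ℤ)):ℚ)) = 0 := by push_cast; ring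
        rw [e, zero_mul]
      exact (drop_top (fun k => ((j:ℚ) - (k:ℚ)) * PP x y m n (k - s)) (j:ℤ)
        (by positivity) hz).symm

lemma G0 (x y : ℚ) (m n : ℕ) :
    G x y m n 0 = ∑ k ∈ Finset.Icc (1:ℤ) ((min m n : ℕ):ℤ), (k:ℚ) * PP x y m n (-k) := by
  have h := Wform x y m n (min m n)
  rw [sub_self] at h
  rw [h]
  have hrefl := sum_Icc_reflect (fun k => (k:ℚ) * PP x y m n (-k)) 0
    (((min m n : ℕ):ℤ) - 1) ((min m n : ℕ):ℤ)
  rw [show ((min m n : ℕ):ℤ) - (((min m n : ℕ):ℤ) - 1) = 1 by ring,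
    show ((min m n : ℕ):ℤ) - 0 = ((min m n : ℕ):ℤ) by ring] at hrefl
  rw [← hrefl]
  apply Finset.sum_congr rfl
  intro k _
  have e2 : k - ((min m n : ℕ):ℤ) = -(((min m n : ℕ):ℤ) - k) := by ring
  have e1 : ((min m n : ℕ):ℚ) - (k:ℚ) = (((((min m n : ℕ):ℤ) - k) : ℤ):ℚ) := by
    push_cast; ring
  rw [e2, e1]
lemma Bform (x y : ℚ) (m n : ℕ) (r : ℕ) :
    (G x y m n ((r:ℤ)+2) + G x y m n (-(r:ℤ)-2)) - (G x y m n ((r:ℤ)+1) + G x y m n (-(r:ℤ)-1))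
      = ∑ k ∈ Finset.Icc (-(r:ℤ)-1) ((r:ℤ)+1), PP x y m n k := by
  induction r with
  | zero =>
      have s1 := Gsec' x y m n 1 ((0:ℤ)+2) ((0:ℤ)+1-1) (by ring) (by ring)
      have s0 := Gsec' x y m n 0 ((0:ℤ)+1) ((0:ℤ)-1) (by ring) (by ring)
      have sm := Gsec' x y m n (-1) ((0:ℤ)-1+1) (-(0:ℤ)-2) (by ring) (by ring)
      have hsum : ∑ k ∈ Finset.Icc (-(0:ℤ)-1) ((0:ℤ)+1), PP x y m n k
          = PP x y m n (-1) + (PP x y m n 0 + PP x y m n 1) := by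
        rw [show (-(0:ℤ)-1) = 0-1 by ring]
        rw [sum_Icc_bot _ (by omega)]
        rw [sum_Icc_top _ (by omega)]
        rw [Finset.Icc_self, Finset.sum_singleton]
        norm_num
      push_cast
      push_cast at hsum
      norm_num at s1 s0 sm hsum ⊢
      rw [hsum]
      linarith [s1, s0, sm]
  | succ r ih =>
      have t1 := Gsec' x y m n ((r:ℤ)+2) ((r:ℤ)+3) ((r:ℤ)+1) (by ring) (by ring)
      have t2 := Gsec' x y m n (-(r:ℤ)-2) (-(r:ℤ)-1) (-(r:ℤ)-3) (by ring) (by ring)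
      have hsum : ∑ k ∈ Finset.Icc (-((r:ℤ)+1)-1) (((r:ℤ)+1)+1), PP x y m n k
          = PP x y m n (-(r:ℤ)-2) + ((∑ k ∈ Finset.Icc (-(r:ℤ)-1) ((r:ℤ)+1), PP x y m n k)
            + PP x y m n ((r:ℤ)+2)) := by
        rw [show -((r:ℤ)+1)-1 = (-(r:ℤ)-1)-1 by ring, sum_Icc_bot _ (by omega),
          show ((r:ℤ)+1)+1 = ((r:ℤ)+1)+1 from rfl, sum_Icc_top _ (by omega)]
        rw [show (-(r:ℤ)-1)-1 = -(r:ℤ)-2 by ring, show ((r:ℤ)+1)+1 = (r:ℤ)+2 by ring]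
      push_cast
      push_cast at ih hsum
      rw [hsum]
      rw [show (r:ℤ)+1+2 = (r:ℤ)+3 by ring, show (r:ℤ)+1+1 = (r:ℤ)+2 by ring,
        show -((r:ℤ)+1)-2 = -(r:ℤ)-3 by ring, show -((r:ℤ)+1)-1 = -(r:ℤ)-2 by ring]
      linarith [t1, t2, ih]

lemma Aform (x y : ℚ) (m n : ℕ) (r : ℕ) :
    G x y m n ((r:ℤ)+1) + G x y m n (-(r:ℤ)-1)
      = 2 * G x y m n 0
        + ∑ k ∈ Finset.Icc (-(r:ℤ)) (r:ℤ), ((r:ℚ) - |(k:ℚ)| + 1) * PP x y m n k := by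
  induction r with
  | zero =>
      have s0 := Gsec' x y m n 0 ((0:ℤ)+1) (-(0:ℤ)-1) (by ring) (by ring)
      have hsum : ∑ k ∈ Finset.Icc (-((0:ℕ):ℤ)) ((0:ℕ):ℤ), (((0:ℕ):ℚ) - |(k:ℚ)| + 1) * PP x y m n k
          = PP x y m n 0 := by
        norm_num
      rw [hsum]
      norm_num at s0 ⊢
      linarith [s0]
  | succ r ih =>
      have hb := Bform x y m n r
      -- sum manipulation
      have hsplit : ∑ k ∈ Finset.Icc (-((r:ℤ)+1)) ((r:ℤ)+1), (((r:ℚ)+1) - |(k:ℚ)| + 1) * PP x y m n k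
          = (∑ k ∈ Finset.Icc (-(r:ℤ)) (r:ℤ), ((r:ℚ) - |(k:ℚ)| + 1) * PP x y m n k)
            + ∑ k ∈ Finset.Icc (-(r:ℤ)-1) ((r:ℤ)+1), PP x y m n k := by
        have e1 : ∀ k : ℤ, (((r:ℚ)+1) - |(k:ℚ)| + 1) * PP x y m n k
            = ((r:ℚ) - |(k:ℚ)| + 1) * PP x y m n k + PP x y m n k := by
          intro k; ring
        rw [show -((r:ℤ)+1) = -(r:ℤ)-1 by ring]
        rw [Finset.sum_congr rfl (fun k _ => e1 k), Finset.sum_add_distrib]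
        congr 1
        -- peel the two endpoint terms with zero weight
        have htop : ∑ k ∈ Finset.Icc (-(r:ℤ)-1) ((r:ℤ)+1), ((r:ℚ) - |(k:ℚ)| + 1) * PP x y m n k
            = (∑ k ∈ Finset.Icc (-(r:ℤ)-1) (r:ℤ), ((r:ℚ) - |(k:ℚ)| + 1) * PP x y m n k)
              + ((r:ℚ) - |(((r:ℤ)+1 : ℤ):ℚ)| + 1) * PP x y m n ((r:ℤ)+1) :=
          sum_Icc_top _ (by omega)
        have hbot : ∑ k ∈ Finset.Icc (-(r:ℤ)-1) (r:ℤ), ((r:ℚ) - |(k:ℚ)| + 1) * PP x y m n k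
            = ((r:ℚ) - |((-(r:ℤ)-1 : ℤ):ℚ)| + 1) * PP x y m n (-(r:ℤ)-1)
              + ∑ k ∈ Finset.Icc (-(r:ℤ)) (r:ℤ), ((r:ℚ) - |(k:ℚ)| + 1) * PP x y m n k := by
          have := sum_Icc_bot (fun k => ((r:ℚ) - |(k:ℚ)| + 1) * PP x y m n k)
            (show (-(r:ℤ))-1 ≤ (r:ℤ) by omega)
          rw [show (-(r:ℤ))-1 = -(r:ℤ)-1 from rfl] at this
          exact this
        have w1 : ((r:ℚ) - |(((r:ℤ)+1 : ℤ):ℚ)| + 1) = 0 := by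
          have : |(((r:ℤ)+1 : ℤ):ℚ)| = (r:ℚ)+1 := by
            rw [abs_of_nonneg (by push_cast; positivity)]
            push_cast; ring
          rw [this]; ring
        have w2 : ((r:ℚ) - |((-(r:ℤ)-1 : ℤ):ℚ)| + 1) = 0 := by
          have h0 : (0:ℚ) ≤ (r:ℚ) := by positivity
          have habs : |((-(r:ℤ)-1 : ℤ):ℚ)| = (r:ℚ)+1 := by
            rw [show ((-(r:ℤ)-1 : ℤ):ℚ) = -((r:ℚ)+1) by push_cast; ring, abs_neg,
              abs_of_nonneg (by linarith)]
          rw [habs]; ring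
        rw [htop, hbot, w1, w2, zero_mul, zero_mul, add_zero, zero_add]
      push_cast
      push_cast at hsplit ih hb
      rw [hsplit]
      rw [show -((r:ℤ)+1)-1 = -(r:ℤ)-2 by ring, show (r:ℤ)+1+1 = (r:ℤ)+2 by ring]
      linarith [ih, hb]
noncomputable def Psi (x y : ℚ) (m n : ℕ) (k : ℤ) : ℚ :=
  (x - m + k) * (y - n + k) * (qbinomZ x ((m:ℤ)-k) * qbinomZ y ((n:ℤ)-k))

lemma hmult (x : ℚ) (m : ℕ) (k : ℤ) :
    ((m:ℚ) - k) * qbinomZ x ((m:ℤ)-k) = (x - m + k + 1) * qbinomZ x ((m:ℤ)-k-1) := by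
  have h := multZ x ((m:ℤ)-k)
  push_cast at h
  linear_combination h

lemma Psi_step (x y : ℚ) (m n : ℕ) (k : ℤ) :
    Psi x y m n (k+1)
      = ((m:ℚ)-k) * ((n:ℚ)-k) * (qbinomZ x ((m:ℤ)-k) * qbinomZ y ((n:ℤ)-k)) := by
  rw [Psi]
  rw [show (m:ℤ)-(k+1) = (m:ℤ)-k-1 by ring, show (n:ℤ)-(k+1) = (n:ℤ)-k-1 by ring]
  have hx := hmult x m k
  have hy := hmult y n k
  push_cast
  linear_combination (-(y - (n:ℚ) + k + 1) * qbinomZ y ((n:ℤ)-k-1)) * hx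
    + (-((m:ℚ) - k) * qbinomZ x ((m:ℤ)-k)) * hy

lemma claim3 (x y : ℚ) (m n : ℕ) (hcon : (x - m) * (y - n) = (m:ℚ) * n) :
    (x+y) * (∑ k ∈ Finset.Icc (1:ℤ) ((min m n : ℕ):ℤ), (k:ℚ) * PP x y m n (-k))
      = (m:ℚ) * n * (qbinomZ x (m:ℤ) * qbinomZ y (n:ℤ)) := by
  have ptw : ∀ k : ℤ, (-Psi x y m n (k+1)) - (-Psi x y m n ((k-1)+1))
      = (k:ℚ) * (x+y) * (qbinomZ x ((m:ℤ)-k) * qbinomZ y ((n:ℤ)-k)) := by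
    intro k
    rw [show k-1+1 = k by ring, Psi_step x y m n k, Psi]
    linear_combination (qbinomZ x ((m:ℤ)-k) * qbinomZ y ((n:ℤ)-k)) * hcon
  have hsum1 : ∑ k ∈ Finset.Icc (1:ℤ) ((min m n : ℕ):ℤ), (k:ℚ) * PP x y m n (-k)
      = ∑ k ∈ Finset.Icc (1:ℤ) ((min m n : ℕ):ℤ),
          (k:ℚ) * (qbinomZ x ((m:ℤ)-k) * qbinomZ y ((n:ℤ)-k)) := by
    apply Finset.sum_congr rfl
    intro k _
    rw [PP, show (m:ℤ) + -k = (m:ℤ)-k by ring, show (n:ℤ) + -k = (n:ℤ)-k by ring]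
  rw [hsum1, Finset.mul_sum]
  have hsum2 : ∑ k ∈ Finset.Icc (1:ℤ) ((min m n : ℕ):ℤ),
        (x+y) * ((k:ℚ) * (qbinomZ x ((m:ℤ)-k) * qbinomZ y ((n:ℤ)-k)))
      = ∑ k ∈ Finset.Icc (1:ℤ) ((min m n : ℕ):ℤ),
          ((fun t => -Psi x y m n (t+1)) k - (fun t => -Psi x y m n (t+1)) (k-1)) := by
    apply Finset.sum_congr rfl
    intro k _
    have := ptw k
    simp only []
    linear_combination -this
  rw [hsum2, tele (fun t => -Psi x y m n (t+1)) 1 ((min m n : ℕ):ℤ) (by omega)]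
  have hf0 : -Psi x y m n ((1:ℤ)-1+1) = -((m:ℚ) * n * (qbinomZ x (m:ℤ) * qbinomZ y (n:ℤ))) := by
    rw [show (1:ℤ)-1+1 = 0+1 by ring, Psi_step x y m n 0]
    norm_num
  have hfM : -Psi x y m n (((min m n : ℕ):ℤ)+1) = 0 := by
    rw [Psi_step x y m n ((min m n : ℕ):ℤ)]
    have hz : ((m:ℚ) - (((min m n : ℕ):ℤ):ℚ)) * ((n:ℚ) - (((min m n : ℕ):ℤ):ℚ)) = 0 := by
      rcases le_total m n with h | h
      · have : ((m:ℚ) - (((min m n : ℕ):ℤ):ℚ)) = 0 := by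
          rw [min_eq_left h]; push_cast; ring
        rw [this, zero_mul]
      · have : ((n:ℚ) - (((min m n : ℕ):ℤ):ℚ)) = 0 := by
          rw [min_eq_right h]; push_cast; ring
        rw [this, mul_zero]
    linear_combination (-(qbinomZ x ((m:ℤ)-((min m n : ℕ):ℤ)) * qbinomZ y ((n:ℤ)-((min m n : ℕ):ℤ)))) * hz
  rw [hfM, hf0]
  ring

lemma sum_to_Phi (x y : ℚ) (M N : ℤ) :
    (∑ a ∈ Finset.Icc (0:ℤ) M, ∑ b ∈ Finset.Icc (0:ℤ) N,
      qbinomZ (x - a + b - 1) (M - a) * qbinomZ (y + a - b - 1) (N - b))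
      = Phi (x - M + N) (y + M - N) M N := by
  rw [Phi]
  have step1 : ∀ i : ℤ, ∑ b ∈ Finset.Icc (0:ℤ) N, cc (x - M + N) (y + M - N) i (N - b)
      = ∑ j ∈ Finset.Icc (0:ℤ) N, cc (x - M + N) (y + M - N) i j := by
    intro i
    have h := sum_Icc_reflect (fun j => cc (x - M + N) (y + M - N) i j) 0 N N
    rw [show N - N = 0 by ring, show N - 0 = N by ring] at h
    exact h
  have step2 : ∑ a ∈ Finset.Icc (0:ℤ) M,
        (∑ b ∈ Finset.Icc (0:ℤ) N, cc (x - M + N) (y + M - N) (M - a) (N - b))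
      = ∑ i ∈ Finset.Icc (0:ℤ) M,
        (∑ b ∈ Finset.Icc (0:ℤ) N, cc (x - M + N) (y + M - N) i (N - b)) := by
    have h := sum_Icc_reflect
      (fun i => ∑ b ∈ Finset.Icc (0:ℤ) N, cc (x - M + N) (y + M - N) i (N - b)) 0 M M
    rw [show M - M = 0 by ring, show M - 0 = M by ring] at h
    exact h
  have h1 : ∀ a b : ℤ, qbinomZ (x - a + b - 1) (M - a) * qbinomZ (y + a - b - 1) (N - b)
      = cc (x - M + N) (y + M - N) (M - a) (N - b) := by
    intro a b
    rw [cc]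
    congr 2 <;> push_cast <;> ring
  calc (∑ a ∈ Finset.Icc (0:ℤ) M, ∑ b ∈ Finset.Icc (0:ℤ) N,
      qbinomZ (x - a + b - 1) (M - a) * qbinomZ (y + a - b - 1) (N - b))
      = ∑ a ∈ Finset.Icc (0:ℤ) M,
          ∑ b ∈ Finset.Icc (0:ℤ) N, cc (x - M + N) (y + M - N) (M - a) (N - b) := by
        apply Finset.sum_congr rfl
        intro a _
        apply Finset.sum_congr rfl
        intro b _
        exact h1 a b
    _ = ∑ i ∈ Finset.Icc (0:ℤ) M,
          ∑ b ∈ Finset.Icc (0:ℤ) N, cc (x - M + N) (y + M - N) i (N - b) := step2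
    _ = ∑ i ∈ Finset.Icc (0:ℤ) M,
          ∑ j ∈ Finset.Icc (0:ℤ) N, cc (x - M + N) (y + M - N) i j := by
        apply Finset.sum_congr rfl
        intro i _
        exact step1 i

theorem guo_zeng_theorem2 (m n r : ℕ) (α : ℚ) (hα : α ≠ 0) (hα1 : α ≠ -1)
    (h : α * m + n ≠ 0) :
    (∑ a ∈ Finset.Icc (0 : ℤ) ((m : ℤ) - r - 2), ∑ b ∈ Finset.Icc (0 : ℤ) ((n : ℤ) - r - 2),
      qbinomZ ((1 + α) * m - a + b - 1) ((m : ℤ) - r - 2 - a) *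
        qbinomZ ((1 + α⁻¹) * n + a - b - 1) ((n : ℤ) - r - 2 - b)) +
    (∑ a ∈ Finset.Icc (0 : ℤ) ((m : ℤ) + r), ∑ b ∈ Finset.Icc (0 : ℤ) ((n : ℤ) + r),
      qbinomZ ((1 + α) * m - a + b - 1) ((m : ℤ) + r - a) *
        qbinomZ ((1 + α⁻¹) * n + a - b - 1) ((n : ℤ) + r - b)) =
    2 * (m * n : ℚ) / ((1 + α) * (m + α⁻¹ * n)) *
      qbinom ((1 + α) * m) m * qbinom ((1 + α⁻¹) * n) n +
    ∑ k ∈ Finset.Icc (-(r : ℤ)) (r : ℤ),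
      ((r : ℚ) - |(k : ℚ)| + 1) * qbinomZ ((1 + α) * m) ((m : ℤ) - k) *
        qbinomZ ((1 + α⁻¹) * n) ((n : ℤ) - k) := by
  set X : ℚ := (1 + α) * m with hX
  set Y : ℚ := (1 + α⁻¹) * n with hY
  have hα1' : 1 + α ≠ 0 := by
    intro hc; apply hα1; linarith
  have hden : (1 + α) * ((m:ℚ) + α⁻¹ * n) = X + Y := by
    rw [hX, hY]
    field_simp
    ring
  have hXY : X + Y ≠ 0 := by
    rw [← hden]
    have h2 : (m:ℚ) + α⁻¹ * n = α⁻¹ * (α * m + n) := by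
      field_simp
    rw [h2]
    exact mul_ne_zero hα1' (mul_ne_zero (inv_ne_zero hα) h)
  have hcon : (X - m) * (Y - n) = (m:ℚ) * n := by
    rw [hX, hY]
    field_simp
    ring
  -- first double sum
  have e1 : (∑ a ∈ Finset.Icc (0 : ℤ) ((m : ℤ) - r - 2), ∑ b ∈ Finset.Icc (0 : ℤ) ((n : ℤ) - r - 2),
      qbinomZ (X - a + b - 1) ((m : ℤ) - r - 2 - a) *
        qbinomZ (Y + a - b - 1) ((n : ℤ) - r - 2 - b)) = G X Y m n (-(r:ℤ)-1) := by
    have hs := sum_to_Phi X Y ((m:ℤ)-r-2) ((n:ℤ)-r-2)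
    rw [hs]
    show _ = Phi (X - m + n) (Y + m - n) ((m:ℤ)-1+(-(r:ℤ)-1)) ((n:ℤ)-1+(-(r:ℤ)-1))
    rw [show (m:ℤ)-1+(-(r:ℤ)-1) = (m:ℤ)-r-2 by ring,
      show (n:ℤ)-1+(-(r:ℤ)-1) = (n:ℤ)-r-2 by ring]
    congr 1 <;> push_cast <;> ring
  have e2 : (∑ a ∈ Finset.Icc (0 : ℤ) ((m : ℤ) + r), ∑ b ∈ Finset.Icc (0 : ℤ) ((n : ℤ) + r),
      qbinomZ (X - a + b - 1) ((m : ℤ) + r - a) *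
        qbinomZ (Y + a - b - 1) ((n : ℤ) + r - b)) = G X Y m n ((r:ℤ)+1) := by
    have hs := sum_to_Phi X Y ((m:ℤ)+r) ((n:ℤ)+r)
    rw [hs]
    show _ = Phi (X - m + n) (Y + m - n) ((m:ℤ)-1+((r:ℤ)+1)) ((n:ℤ)-1+((r:ℤ)+1))
    rw [show (m:ℤ)-1+((r:ℤ)+1) = (m:ℤ)+r by ring,
      show (n:ℤ)-1+((r:ℤ)+1) = (n:ℤ)+r by ring]
    congr 1 <;> push_cast <;> ring
  rw [e1, e2]
  -- RHS sum = Aform's sum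
  have e3 : ∑ k ∈ Finset.Icc (-(r : ℤ)) (r : ℤ),
      ((r : ℚ) - |(k : ℚ)| + 1) * qbinomZ X ((m : ℤ) - k) * qbinomZ Y ((n : ℤ) - k)
      = ∑ k ∈ Finset.Icc (-(r : ℤ)) (r : ℤ), ((r : ℚ) - |(k : ℚ)| + 1) * PP X Y m n k := by
    have hrefl := sum_Icc_reflect
      (fun k => ((r : ℚ) - |(k : ℚ)| + 1) * qbinomZ X ((m : ℤ) - k) * qbinomZ Y ((n : ℤ) - k))
      (-(r:ℤ)) (r:ℤ) 0
    rw [show (0:ℤ) - (r:ℤ) = -(r:ℤ) by ring, show (0:ℤ) - (-(r:ℤ)) = (r:ℤ) by ring] at hrefl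
    rw [← hrefl]
    apply Finset.sum_congr rfl
    intro k _
    show ((r : ℚ) - |(((0:ℤ) - k : ℤ):ℚ)| + 1) * qbinomZ X ((m : ℤ) - (0 - k))
            * qbinomZ Y ((n : ℤ) - (0 - k))
        = ((r : ℚ) - |(k : ℚ)| + 1) * PP X Y m n k
    rw [show ((m:ℤ) - (0 - k)) = (m:ℤ) + k by ring, show ((n:ℤ) - (0 - k)) = (n:ℤ) + k by ring]
    rw [show (((0:ℤ) - k : ℤ):ℚ) = -(k:ℚ) by push_cast; ring, abs_neg]
    simp only [PP]
    ring
  rw [e3]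
  -- first RHS term = 2 * G 0
  have hg0 := G0 X Y m n
  have hc3 := claim3 X Y m n hcon
  have e4 : 2 * ((m:ℚ) * n) / ((1 + α) * (m + α⁻¹ * n)) * qbinom X m * qbinom Y n
      = 2 * G X Y m n 0 := by
    rw [hden, hg0]
    rw [← qbinomZ_coe X m, ← qbinomZ_coe Y n]
    rw [div_mul_eq_mul_div, div_mul_eq_mul_div, div_eq_iff hXY]
    linear_combination (-2) * hc3
  rw [e4]
  have ha := Aform X Y m n r
  linarith [ha]
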